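/- arXiv:1211.6876 — 5 statements merged into one kernel-verified Lean document; each statement's English description precedes it below -/
import Mathlib

section
/- Riesz decomposition, part (a): For a Markov operator T on a von Neumann algebra A, a positive element y ∈ A₊ is a potential (i.e. y = Σ_{n=0}^∞ Tⁿ(x) for some x ∈ A₊) if and only if T(y) ≤ y and Tⁿ(y) → 0 in the strong operator topology as n → ∞. -/
open Filter Topology ContinuousLinearMap

namespace QMP

variable {H : Type*} [NormedAddCommGroup H] [InnerProductSpace ℂ H] [CompleteSpace H]

/-- `T` is a (quantum) Markov operator on the von Neumann algebra `A`:
a normal, unital, completely positive linear map leaving `A` invariant. -/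
structure IsMarkov (A : VonNeumannAlgebra H) (T : (H →L[ℂ] H) → (H →L[ℂ] H)) : Prop where
  linear : IsLinearMap ℂ T
  mapsSelf : ∀ x ∈ A, T x ∈ A
  unital : T 1 = 1
  cp : ∀ (n : ℕ) (a b : Fin n → (H →L[ℂ] H)),
    0 ≤ ∑ i : Fin n, ∑ j : Fin n, star (b i) * T (star (a i) * a j) * b j
  normal : ∀ {ι : Type} [Preorder ι] [IsDirected ι (· ≤ ·)] (f : ι → (H →L[ℂ] H))
    (y : H →L[ℂ] H), Monotone f → IsLUB (Set.range f) y →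
      IsLUB (Set.range fun i => T (f i)) (T y)

/-- `y = ∑ₙ Tⁿ x` with convergence in the strong operator topology. -/
def SOTSum (T : (H →L[ℂ] H) → (H →L[ℂ] H)) (x y : H →L[ℂ] H) : Prop :=
  ∀ η : H, Tendsto (fun N => ∑ n ∈ Finset.range N, (T^[n] x) η) atTop (𝓝 (y η))

/-- `x ∈ A₊` is `T`-summable: `∑ₙ Tⁿ x` converges strongly to an element of `A₊`. -/
def TSummable (A : VonNeumannAlgebra H) (T : (H →L[ℂ] H) → (H →L[ℂ] H))
    (x : H →L[ℂ] H) : Prop :=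
  x ∈ A ∧ 0 ≤ x ∧ ∃ y, y ∈ A ∧ 0 ≤ y ∧ SOTSum T x y

/-- `y` is a potential for `T`: `y = ∑ₙ Tⁿ x` for some `x ∈ A₊`. -/
def IsPotential (A : VonNeumannAlgebra H) (T : (H →L[ℂ] H) → (H →L[ℂ] H))
    (y : H →L[ℂ] H) : Prop :=
  y ∈ A ∧ 0 ≤ y ∧ ∃ x, x ∈ A ∧ 0 ≤ x ∧ SOTSum T x y

/-- `p` is an orthogonal projection belonging to `A`. -/
def IsProj (A : VonNeumannAlgebra H) (p : H →L[ℂ] H) : Prop :=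
  p ∈ A ∧ IsSelfAdjoint p ∧ IsIdempotentElem p

/-- `p` is the support projection of the self-adjoint element `a`. -/
def IsSupport (A : VonNeumannAlgebra H) (a p : H →L[ℂ] H) : Prop :=
  IsProj A p ∧ a = p * a * p ∧ ∀ q, IsProj A q → a = q * a * q → p ≤ q

/-- `s` is the supremum of the family of projections `q` in the projection lattice of `A`. -/
def IsProjSup (A : VonNeumannAlgebra H) {ι : Type*} (q : ι → (H →L[ℂ] H))
    (s : H →L[ℂ] H) : Prop :=
  IsProj A s ∧ (∀ i, q i ≤ s) ∧ ∀ r, IsProj A r → (∀ i, q i ≤ r) → s ≤ r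

end QMP

open QMP Filter Topology

namespace QMP

section Aux

variable {H : Type*} [NormedAddCommGroup H] [InnerProductSpace ℂ H] [CompleteSpace H]
variable {A : VonNeumannAlgebra H} {T : (H →L[ℂ] H) → (H →L[ℂ] H)}

/-- A Markov operator preserves positivity. -/
lemma IsMarkov.map_nonneg (hT : IsMarkov A T) {z : H →L[ℂ] H} (hz : 0 ≤ z) :
    0 ≤ T z := by
  have h := hT.cp 1 (fun _ => CFC.sqrt z) (fun _ => 1)
  simp only [Fin.sum_univ_one, star_one, one_mul, mul_one] at h
  rwa [(IsSelfAdjoint.of_nonneg (CFC.sqrt_nonneg (a := z))).star_eq,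
    CFC.sqrt_mul_sqrt_self z hz] at h

lemma IsMarkov.iterate_sub (hT : IsMarkov A T) (a b : H →L[ℂ] H) (n : ℕ) :
    T^[n] (a - b) = T^[n] a - T^[n] b := by
  induction n with
  | zero => simp
  | succ n ih =>
    simp only [Function.iterate_succ_apply', ih]
    exact hT.linear.map_sub _ _

lemma IsMarkov.map_sum' (hT : IsMarkov A T) (f : ℕ → (H →L[ℂ] H)) (N : ℕ) :
    T (∑ n ∈ Finset.range N, f n) = ∑ n ∈ Finset.range N, T (f n) := by
  induction N with
  | zero => simpa using hT.linear.map_zero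
  | succ N ih => rw [Finset.sum_range_succ, Finset.sum_range_succ, hT.linear.map_add, ih]

end Aux

end QMP

/-- Riesz decomposition, part (a): `y ∈ A₊` is a potential iff `T y ≤ y` and
`Tⁿ y → 0` in the strong operator topology. -/
theorem isPotential_iff_superharmonic_and_tendsto_zero
    {H : Type*} [NormedAddCommGroup H] [InnerProductSpace ℂ H] [CompleteSpace H]
    (A : VonNeumannAlgebra H) (T : (H →L[ℂ] H) → (H →L[ℂ] H)) (hT : IsMarkov A T)
    (y : H →L[ℂ] H) (hy : y ∈ A) (hy0 : 0 ≤ y) :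
    (∃ x, x ∈ A ∧ 0 ≤ x ∧ SOTSum T x y) ↔
      (T y ≤ y ∧ ∀ η : H, Tendsto (fun n => (T^[n] y) η) atTop (𝓝 0)) := by
  constructor
  · rintro ⟨x, hxA, hx0, hsum⟩
    set S : ℕ → (H →L[ℂ] H) := fun N => ∑ n ∈ Finset.range N, (T^[n] x) with hS
    have hSapp : ∀ (N : ℕ) (η : H), S N η = ∑ n ∈ Finset.range N, (T^[n] x) η := by
      intro N η
      simp [hS, ContinuousLinearMap.sum_apply]
    have hsum' : ∀ η : H, Tendsto (fun N => S N η) atTop (𝓝 (y η)) := by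
      intro η
      simpa [hSapp] using hsum η
    have hiter_pos : ∀ n : ℕ, 0 ≤ T^[n] x := by
      intro n
      induction n with
      | zero => simpa using hx0
      | succ n ih =>
        rw [Function.iterate_succ_apply']
        exact hT.map_nonneg ih
    have hSpos : ∀ N, 0 ≤ S N := fun N => Finset.sum_nonneg fun n _ => hiter_pos n
    have hmono : Monotone S := by
      apply monotone_nat_of_le_succ
      intro N
      have : S (N + 1) = S N + T^[N] x := Finset.sum_range_succ _ _
      rw [this]
      exact le_add_of_nonneg_right (hiter_pos N)
    -- inner products of partial sums converge
    have hinner : ∀ η : H, Tendsto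
        (fun N => RCLike.re (inner ℂ (S N η) η : ℂ)) atTop
        (𝓝 (RCLike.re (inner ℂ (y η) η : ℂ))) := by
      intro η
      exact (RCLike.continuous_re.tendsto _).comp (((hsum' η).inner tendsto_const_nhds))
    have hsa : ∀ N, IsSelfAdjoint (S N) := fun N => IsSelfAdjoint.of_nonneg (hSpos N)
    have hysa : IsSelfAdjoint y := IsSelfAdjoint.of_nonneg hy0
    -- y is the least upper bound of the partial sums
    have hlub : IsLUB (Set.range S) y := by
      constructor
      · rintro _ ⟨N, rfl⟩
        rw [ContinuousLinearMap.le_def]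
        refine ⟨(hysa.sub (hsa N)).isSymmetric, fun η => ?_⟩
        have hmem : ∀ M, N ≤ M → 0 ≤ RCLike.re (inner ℂ ((S M - S N) η) η : ℂ) := by
          intro M hM
          exact (hmono hM).2 η
        have hts : Tendsto (fun M => RCLike.re (inner ℂ ((S M - S N) η) η : ℂ)) atTop
            (𝓝 (RCLike.re (inner ℂ ((y - S N) η) η : ℂ))) := by
          simp only [ContinuousLinearMap.sub_apply, inner_sub_left, map_sub]
          exact (hinner η).sub tendsto_const_nhds
        exact ge_of_tendsto hts (eventually_atTop.2 ⟨N, hmem⟩)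
      · intro b hb
        have hbN : ∀ N, S N ≤ b := fun N => hb ⟨N, rfl⟩
        have hbsa : IsSelfAdjoint b := by
          have h0 := hbN 0
          rw [ContinuousLinearMap.le_def] at h0
          simpa [hS] using ContinuousLinearMap.isSelfAdjoint_iff_isSymmetric.mpr h0.1
        rw [ContinuousLinearMap.le_def]
        refine ⟨(hbsa.sub hysa).isSymmetric, fun η => ?_⟩
        · have hmem : ∀ M : ℕ, 0 ≤ RCLike.re (inner ℂ ((b - S M) η) η : ℂ) := fun M =>
            (hbN M).2 η
          have hts : Tendsto (fun M => RCLike.re (inner ℂ ((b - S M) η) η : ℂ)) atTop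
              (𝓝 (RCLike.re (inner ℂ ((b - y) η) η : ℂ))) := by
            simp only [ContinuousLinearMap.sub_apply, inner_sub_left, map_sub]
            exact tendsto_const_nhds.sub (hinner η)
          exact ge_of_tendsto hts (Eventually.of_forall hmem)
    -- use normality
    have hlub2 : IsLUB (Set.range fun N => T (S N)) (T y) := hT.normal S y hmono hlub
    have hTS : ∀ N, T (S N) = S (N + 1) - x := by
      intro N
      have h1 : T (S N) = ∑ n ∈ Finset.range N, T^[n + 1] x := by
        show T (∑ n ∈ Finset.range N, T^[n] x) = _
        rw [hT.map_sum']
        simp [Function.iterate_succ_apply']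
      have h2 : S (N + 1) = (∑ n ∈ Finset.range N, T^[n + 1] x) + x := by
        simpa using Finset.sum_range_succ' (fun n => T^[n] x) N
      rw [h1, h2, add_sub_cancel_right]
    have hlub3 : IsLUB (Set.range fun N => T (S N)) (y - x) := by
      simp only [hTS]
      constructor
      · rintro _ ⟨N, rfl⟩
        exact sub_le_sub_right (hlub.1 ⟨N + 1, rfl⟩) x
      · intro b hb
        rw [sub_le_iff_le_add]
        refine hlub.2 ?_
        rintro _ ⟨N, rfl⟩
        calc S N ≤ S (N + 1) := hmono (Nat.le_succ N)
          _ = (S (N + 1) - x) + x := by abel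
          _ ≤ b + x := add_le_add_left (hb ⟨N, rfl⟩) x
    have hTy : T y = y - x := hlub2.unique hlub3
    constructor
    · rw [hTy]
      exact sub_le_self y hx0
    · intro η
      have hiter : ∀ n : ℕ, T^[n] y = y - S n := by
        intro n
        induction n with
        | zero => simp [hS]
        | succ n ih =>
          rw [Function.iterate_succ_apply', ih,
            hT.linear.map_sub, hTy, hTS n]
          abel
      have : Tendsto (fun n => y η - S n η) atTop (𝓝 (y η - y η)) :=
        tendsto_const_nhds.sub (hsum' η)
      rw [sub_self] at this
      refine this.congr fun n => ?_
      rw [hiter n]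
      simp
  · rintro ⟨hle, htend⟩
    refine ⟨y - T y, sub_mem hy (hT.mapsSelf y hy), sub_nonneg.2 hle, fun η => ?_⟩
    have key : ∀ N : ℕ, (∑ n ∈ Finset.range N, (T^[n] (y - T y)) η)
        = y η - (T^[N] y) η := by
      intro N
      have h1 : ∀ n : ℕ, T^[n] (y - T y) = T^[n] y - T^[n + 1] y := by
        intro n
        rw [hT.iterate_sub, ← Function.iterate_succ_apply]
      calc (∑ n ∈ Finset.range N, (T^[n] (y - T y)) η)
          = (∑ n ∈ Finset.range N, (T^[n] (y - T y))) η := by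
            simp [ContinuousLinearMap.sum_apply]
        _ = (y - T^[N] y) η := by
            rw [show (∑ n ∈ Finset.range N, (T^[n] (y - T y)))
                = y - T^[N] y from ?_]
            simp only [h1]
            simpa using Finset.sum_range_sub' (fun n => T^[n] y) N
        _ = y η - (T^[N] y) η := by simp
    simp only [key]
    have : Tendsto (fun N => y η - (T^[N] y) η) atTop (𝓝 (y η - 0)) :=
      tendsto_const_nhds.sub (htend η)
    rwa [sub_zero] at this
end

section
/- Riesz decomposition, part (b): A positive element a ∈ A₊ is superharmonic (T(a) ≤ a) if and only if a = y + h where y is a potential for T and h ∈ A₊ is a fixed point of T (T(h) = h); moreover this decomposition is unique. -/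
open Filter Topology ContinuousLinearMap

open QMP

section RieszAux
open RCLike
variable {H : Type*} [NormedAddCommGroup H] [InnerProductSpace ℂ H] [CompleteSpace H]

local notation "⟪" x ", " y "⟫" => @inner ℂ _ _ x y

private lemma pos_apply_norm_sq {B : H →L[ℂ] H} (hB : B.IsPositive) (η : H) :
    ‖B η‖ ^ 2 ≤ ‖B‖ * re ⟪B η, η⟫ := by
  have hsym := hB.1
  letI core : PreInnerProductSpace.Core ℂ H :=
  { inner := fun u v => ⟪B u, v⟫
    conj_inner_symm := fun u v => (inner_conj_symm u (B v)).trans (hsym u v).symm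
    re_inner_nonneg := fun u => hB.2 u
    add_left := fun u v w => by simp only [map_add, inner_add_left]
    smul_left := fun u v r => by simp only [map_smul, inner_smul_left] }
  have key : ‖⟪B η, B η⟫‖ * ‖⟪B (B η), η⟫‖ ≤ re ⟪B η, η⟫ * re ⟪B (B η), B η⟫ :=
    InnerProductSpace.Core.inner_mul_inner_self_le (𝕜 := ℂ) (F := H) η (B η)
  have h1 : ⟪B (B η), η⟫ = ⟪B η, B η⟫ := hsym (B η) η
  have h2 : ‖⟪B η, B η⟫‖ = ‖B η‖ ^ 2 := by
    rw [inner_self_eq_norm_sq_to_K]; simp [norm_pow]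
  rw [h1, h2] at key
  have h3 : re ⟪B (B η), B η⟫ ≤ ‖B‖ * ‖B η‖ ^ 2 := by
    refine (re_le_norm _).trans ((norm_inner_le_norm _ _).trans ?_)
    calc ‖B (B η)‖ * ‖B η‖ ≤ (‖B‖ * ‖B η‖) * ‖B η‖ := by
          gcongr; exact B.le_opNorm _
      _ = ‖B‖ * ‖B η‖ ^ 2 := by ring
  rcases eq_or_lt_of_le (norm_nonneg (B η)) with h0 | h0
  · rw [← h0]
    simpa using mul_nonneg (norm_nonneg B) (show (0:ℝ) ≤ re ⟪B η, η⟫ from hB.2 η)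
  · have hre : (0:ℝ) ≤ re ⟪B η, η⟫ := hB.2 η
    nlinarith [mul_le_mul_of_nonneg_left h3 hre, pow_pos h0 2]

private lemma sot_isSelfAdjoint {f : ℕ → H →L[ℂ] H} {h : H →L[ℂ] H}
    (hsa : ∀ n, IsSelfAdjoint (f n))
    (hconv : ∀ η, Tendsto (fun n => f n η) atTop (𝓝 (h η))) : IsSelfAdjoint h := by
  rw [ContinuousLinearMap.isSelfAdjoint_iff_isSymmetric]
  intro x y
  have h1 : Tendsto (fun n => ⟪f n x, y⟫) atTop (𝓝 ⟪h x, y⟫) :=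
    (hconv x).inner tendsto_const_nhds
  have h2 : Tendsto (fun n => ⟪x, f n y⟫) atTop (𝓝 ⟪x, h y⟫) :=
    tendsto_const_nhds.inner (hconv y)
  have he : (fun n => ⟪f n x, y⟫) = fun n => ⟪x, f n y⟫ :=
    funext fun n => (ContinuousLinearMap.isSelfAdjoint_iff_isSymmetric.mp (hsa n)) x y
  rw [he] at h1
  exact tendsto_nhds_unique h1 h2

private lemma sot_tendsto_re {f : ℕ → H →L[ℂ] H} {h g : H →L[ℂ] H}
    (hconv : ∀ η, Tendsto (fun n => f n η) atTop (𝓝 (h η))) (η : H) :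
    Tendsto (fun n => re ⟪(f n - g) η, η⟫) atTop (𝓝 (re ⟪(h - g) η, η⟫)) := by
  have h1 : Tendsto (fun n => (f n - g) η) atTop (𝓝 ((h - g) η)) := by
    simpa [ContinuousLinearMap.sub_apply] using (hconv η).sub tendsto_const_nhds
  exact (RCLike.continuous_re.tendsto _).comp (h1.inner tendsto_const_nhds)

private lemma sot_le {f : ℕ → H →L[ℂ] H} {h g : H →L[ℂ] H}
    (hsa : ∀ n, IsSelfAdjoint (f n)) (hg : IsSelfAdjoint g)
    (hconv : ∀ η, Tendsto (fun n => f n η) atTop (𝓝 (h η)))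
    (hle : ∀ᶠ n in atTop, g ≤ f n) : g ≤ h := by
  rw [ContinuousLinearMap.le_def]
  refine ⟨ContinuousLinearMap.isSelfAdjoint_iff_isSymmetric.mp ((sot_isSelfAdjoint hsa hconv).sub hg), fun η => ?_⟩
  show (0:ℝ) ≤ re ⟪(h - g) η, η⟫
  exact ge_of_tendsto (sot_tendsto_re hconv η)
    (hle.mono fun n hn => ((ContinuousLinearMap.le_def _ _).mp hn).2 η)

private lemma sot_ge {f : ℕ → H →L[ℂ] H} {h g : H →L[ℂ] H}
    (hsa : ∀ n, IsSelfAdjoint (f n)) (hg : IsSelfAdjoint g)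
    (hconv : ∀ η, Tendsto (fun n => f n η) atTop (𝓝 (h η)))
    (hle : ∀ n, f n ≤ g) : h ≤ g := by
  rw [ContinuousLinearMap.le_def]
  refine ⟨ContinuousLinearMap.isSelfAdjoint_iff_isSymmetric.mp (hg.sub (sot_isSelfAdjoint hsa hconv)), fun η => ?_⟩
  show (0:ℝ) ≤ re ⟪(g - h) η, η⟫
  have key : Tendsto (fun n => re ⟪(g - f n) η, η⟫) atTop (𝓝 (re ⟪(g - h) η, η⟫)) := by
    have h1 : Tendsto (fun n => (g - f n) η) atTop (𝓝 ((g - h) η)) := by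
      simpa [ContinuousLinearMap.sub_apply] using (tendsto_const_nhds (x := g η)).sub (hconv η)
    exact (RCLike.continuous_re.tendsto _).comp (h1.inner tendsto_const_nhds)
  exact ge_of_tendsto key
    (Eventually.of_forall fun n => ((ContinuousLinearMap.le_def _ _).mp (hle n)).2 η)

private lemma sot_isLUB {f : ℕ → H →L[ℂ] H} {h : H →L[ℂ] H} (hmono : Monotone f)
    (hsa : ∀ n, IsSelfAdjoint (f n))
    (hconv : ∀ η, Tendsto (fun n => f n η) atTop (𝓝 (h η))) :
    IsLUB (Set.range f) h := by
  constructor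
  · rintro _ ⟨n, rfl⟩
    exact sot_le hsa (hsa n) hconv (eventually_atTop.mpr ⟨n, fun m hm => hmono hm⟩)
  · intro u hu
    have h0 : f 0 ≤ u := hu ⟨0, rfl⟩
    have hu_sa : IsSelfAdjoint u := by
      have he : u = (u - f 0) + f 0 := by abel
      rw [he]; exact (ContinuousLinearMap.isSelfAdjoint_iff_isSymmetric.mpr (((ContinuousLinearMap.le_def _ _).mp h0).1)).add (hsa 0)
    exact sot_ge hsa hu_sa hconv fun n => hu ⟨n, rfl⟩

private lemma sot_mem {A : VonNeumannAlgebra H} {f : ℕ → H →L[ℂ] H} {h : H →L[ℂ] H}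
    (hf : ∀ n, f n ∈ A) (hconv : ∀ η, Tendsto (fun n => f n η) atTop (𝓝 (h η))) :
    h ∈ A := by
  have key : h ∈ (A : Set (H →L[ℂ] H)) := by
    rw [← A.centralizer_centralizer]
    rw [Set.mem_centralizer_iff]
    intro g hg
    ext η
    have h1 : Tendsto (fun n => g (f n η)) atTop (𝓝 (g (h η))) :=
      (g.continuous.tendsto _).comp (hconv η)
    have h2 : ∀ n, g (f n η) = f n (g η) := fun n => by
      have hcomm := hg (f n) (hf n)
      calc g (f n η) = (g * f n) η := rfl
        _ = (f n * g) η := by rw [← hcomm]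
        _ = f n (g η) := rfl
    simp only [h2] at h1
    exact tendsto_nhds_unique h1 (hconv (g η))
  exact key

private lemma sot_exists {f : ℕ → H →L[ℂ] H} (hmono : Monotone f)
    (h0 : ∀ n, (0:H →L[ℂ] H) ≤ f n) {c : H →L[ℂ] H} (hc : ∀ n, f n ≤ c) :
    ∃ h : H →L[ℂ] H, ∀ η, Tendsto (fun n => f n η) atTop (𝓝 (h η)) := by
  have hnorm : ∀ n, ‖f n‖ ≤ ‖c‖ := fun n =>
    CStarAlgebra.norm_le_norm_of_nonneg_of_le (h0 n) (hc n)
  have hcauchy : ∀ η : H, CauchySeq (fun n => f n η) := by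
    intro η
    set r : ℕ → ℝ := fun n => re ⟪f n η, η⟫ with hr
    have hrmono : Monotone r := by
      intro m n hmn
      have hpos := ((ContinuousLinearMap.le_def _ _).mp (hmono hmn)).2 η
      have hpos' : (0:ℝ) ≤ re ⟪(f n - f m) η, η⟫ := hpos
      simp only [ContinuousLinearMap.sub_apply, inner_sub_left, map_sub] at hpos'
      simp only [hr]
      linarith
    have hrbdd : BddAbove (Set.range r) := by
      refine ⟨re ⟪c η, η⟫, ?_⟩
      rintro _ ⟨n, rfl⟩
      have hpos : (0:ℝ) ≤ re ⟪(c - f n) η, η⟫ := ((ContinuousLinearMap.le_def _ _).mp (hc n)).2 η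
      simp only [ContinuousLinearMap.sub_apply, inner_sub_left, map_sub] at hpos
      simp only [hr]
      linarith
    have hrc : CauchySeq r := (tendsto_atTop_ciSup hrmono hrbdd).cauchySeq
    rw [Metric.cauchySeq_iff] at hrc ⊢
    intro ε hε
    obtain ⟨N, hN⟩ := hrc (ε ^ 2 / (2 * ‖c‖ + 1)) (by positivity)
    refine ⟨N, fun m hm n hn => ?_⟩
    -- main estimate, symmetric in m n; prove for n ≤ m
    have main : ∀ m n, N ≤ m → N ≤ n → n ≤ m → dist (f m η) (f n η) < ε := by
      intro m n hm hn hnm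
      have hposB : (f m - f n).IsPositive :=
        (ContinuousLinearMap.le_def _ _).mp (hmono hnm)
      have hkey := pos_apply_norm_sq hposB η
      have hBnorm : ‖f m - f n‖ ≤ 2 * ‖c‖ := by
        calc ‖f m - f n‖ ≤ ‖f m‖ + ‖f n‖ := norm_sub_le _ _
          _ ≤ 2 * ‖c‖ := by linarith [hnorm m, hnorm n]
      have hres : re ⟪(f m - f n) η, η⟫ = r m - r n := by
        simp only [ContinuousLinearMap.sub_apply, inner_sub_left, map_sub, hr]
      have hrdist := hN m hm n hn
      rw [Real.dist_eq] at hrdist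
      have hrmn : r m - r n < ε ^ 2 / (2 * ‖c‖ + 1) := lt_of_le_of_lt (le_abs_self _) hrdist
      have hrnonneg : (0:ℝ) ≤ re ⟪(f m - f n) η, η⟫ := hposB.2 η
      have hsq : ‖(f m - f n) η‖ ^ 2 < ε ^ 2 := by
        have h1 : ‖(f m - f n) η‖ ^ 2 ≤ (2 * ‖c‖) * (r m - r n) := by
          calc ‖(f m - f n) η‖ ^ 2 ≤ ‖f m - f n‖ * re ⟪(f m - f n) η, η⟫ := hkey
            _ ≤ (2 * ‖c‖) * (r m - r n) := by
                rw [hres] at hrnonneg ⊢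
                exact mul_le_mul hBnorm le_rfl hrnonneg (by positivity)
        have h2 : (2 * ‖c‖) * (r m - r n) < ε ^ 2 := by
          have hcpos : (0:ℝ) < 2 * ‖c‖ + 1 := by positivity
          have hrmn0 : (0:ℝ) ≤ r m - r n := by rw [hres] at hrnonneg; linarith
          calc (2 * ‖c‖) * (r m - r n) ≤ (2 * ‖c‖ + 1) * (r m - r n) := by nlinarith
            _ < (2 * ‖c‖ + 1) * (ε ^ 2 / (2 * ‖c‖ + 1)) := by
                apply mul_lt_mul_of_pos_left _ hcpos
                -- need strictness; but if r m - r n = 0 use ε^2/(..)>0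
                exact hrmn
            _ = ε ^ 2 := by field_simp
        linarith
      have := lt_of_pow_lt_pow_left₀ 2 hε.le hsq
      rw [dist_eq_norm, ← ContinuousLinearMap.sub_apply]
      exact this
    rcases le_total n m with hnm | hmn
    · exact main m n hm hn hnm
    · rw [dist_comm]; exact main n m hn hm hmn
  choose F hF using fun η => cauchySeq_tendsto_of_complete (hcauchy η)
  exact ⟨continuousLinearMapOfTendsto f (tendsto_pi_nhds.mpr hF), hF⟩

end RieszAux

section MarkovAux
open RCLike
variable {H : Type*} [NormedAddCommGroup H] [InnerProductSpace ℂ H] [CompleteSpace H]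
variable {A : VonNeumannAlgebra H} {T : (H →L[ℂ] H) → (H →L[ℂ] H)}

private lemma markov_pos (hT : IsMarkov A T) {x : H →L[ℂ] H} (hx : 0 ≤ x) : 0 ≤ T x := by
  have hc : star (CFC.sqrt x) * CFC.sqrt x = x := by
    rw [(IsSelfAdjoint.of_nonneg (CFC.sqrt_nonneg x)).star_eq, CFC.sqrt_mul_sqrt_self x hx]
  have key := hT.cp 1 (fun _ => CFC.sqrt x) (fun _ => 1)
  simpa [Fin.sum_univ_one, hc] using key

private lemma markov_mono (hT : IsMarkov A T) {x y : H →L[ℂ] H} (h : x ≤ y) : T x ≤ T y := by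
  have key := markov_pos hT (sub_nonneg.mpr h)
  rw [hT.linear.map_sub] at key
  exact sub_nonneg.mp key

private lemma iter_pos (hT : IsMarkov A T) {x : H →L[ℂ] H} (hx : 0 ≤ x) (n : ℕ) :
    0 ≤ T^[n] x := by
  induction n with
  | zero => exact hx
  | succ n ih => rw [Function.iterate_succ_apply']; exact markov_pos hT ih

private lemma iter_mem (hT : IsMarkov A T) {x : H →L[ℂ] H} (hx : x ∈ A) (n : ℕ) :
    T^[n] x ∈ A := by
  induction n with
  | zero => exact hx
  | succ n ih => rw [Function.iterate_succ_apply']; exact hT.mapsSelf _ ih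

/-- partial sums of a potential -/
private lemma pS_apply (T : (H →L[ℂ] H) → (H →L[ℂ] H)) (x : H →L[ℂ] H) (N : ℕ) (η : H) :
    (∑ n ∈ Finset.range N, T^[n] x) η = ∑ n ∈ Finset.range N, (T^[n] x) η := by
  simp

private lemma pS_TS (hT : IsMarkov A T) (x : H →L[ℂ] H) (N : ℕ) :
    T (∑ n ∈ Finset.range N, T^[n] x) =
      (∑ n ∈ Finset.range (N + 1), T^[n] x) - x := by
  have h1 : T (∑ n ∈ Finset.range N, T^[n] x) = ∑ n ∈ Finset.range N, T^[n + 1] x := by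
    have := map_sum (IsLinearMap.mk' T hT.linear) (fun n => T^[n] x) (Finset.range N)
    simp only [IsLinearMap.mk'_apply] at this
    rw [this]
    exact Finset.sum_congr rfl fun n _ => (Function.iterate_succ_apply' T n x).symm
  rw [h1, eq_sub_iff_add_eq, Finset.sum_range_succ']
  simp [add_comm]

private lemma potential_T_eq (hT : IsMarkov A T) {x y : H →L[ℂ] H}
    (hx0 : 0 ≤ x) (hsum : SOTSum T x y) : T y = y - x := by
  set S : ℕ → H →L[ℂ] H := fun N => ∑ n ∈ Finset.range N, T^[n] x with hS
  have hterm : ∀ n, (0:H →L[ℂ] H) ≤ T^[n] x := iter_pos hT hx0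
  have hSpos : ∀ N, (0:H →L[ℂ] H) ≤ S N := fun N => Finset.sum_nonneg fun i _ => hterm i
  have hSsa : ∀ N, IsSelfAdjoint (S N) := fun N => .of_nonneg (hSpos N)
  have hSmono : Monotone S := fun N M h =>
    Finset.sum_le_sum_of_subset_of_nonneg (Finset.range_subset_range.mpr h) fun i _ _ => hterm i
  have hconv : ∀ η, Tendsto (fun N => S N η) atTop (𝓝 (y η)) := by
    intro η
    have := hsum η
    simpa [hS, pS_apply] using this
  have hlub : IsLUB (Set.range S) y := sot_isLUB hSmono hSsa hconv
  have hTlub : IsLUB (Set.range fun N => T (S N)) (T y) := hT.normal S y hSmono hlub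
  have hxsa : IsSelfAdjoint x := .of_nonneg hx0
  have hlub2 : IsLUB (Set.range fun N => S (N + 1) - x) (y - x) := by
    apply sot_isLUB
    · exact fun N M h => sub_le_sub_right (hSmono (by omega)) x
    · exact fun N => (hSsa (N + 1)).sub hxsa
    · intro η
      have h1 : Tendsto (fun N => S (N + 1) η) atTop (𝓝 (y η)) :=
        (hconv η).comp (tendsto_add_atTop_nat 1)
      simpa [ContinuousLinearMap.sub_apply] using h1.sub tendsto_const_nhds
  have hfun : (fun N => T (S N)) = fun N => S (N + 1) - x := funext fun N => pS_TS hT x N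
  rw [hfun] at hTlub
  exact hTlub.unique hlub2

private lemma potential_iter_eq (hT : IsMarkov A T) {x y : H →L[ℂ] H}
    (hx0 : 0 ≤ x) (hsum : SOTSum T x y) (k : ℕ) :
    T^[k] y = y - ∑ n ∈ Finset.range k, T^[n] x := by
  induction k with
  | zero => simp
  | succ k ih =>
    rw [Function.iterate_succ_apply', ih, hT.linear.map_sub, potential_T_eq hT hx0 hsum,
      pS_TS hT x k]
    abel

end MarkovAux


/-- Riesz decomposition, part (b): `a ∈ A₊` is superharmonic iff `a = y + h` with `y`
a potential and `h ∈ A₊` a fixed point of `T`; such a decomposition is unique. -/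
theorem superharmonic_iff_potential_add_fixed
    {H : Type*} [NormedAddCommGroup H] [InnerProductSpace ℂ H] [CompleteSpace H]
    (A : VonNeumannAlgebra H) (T : (H →L[ℂ] H) → (H →L[ℂ] H)) (hT : IsMarkov A T)
    (a : H →L[ℂ] H) (ha : a ∈ A) (ha0 : 0 ≤ a) :
    (T a ≤ a ↔ ∃ y h, IsPotential A T y ∧ h ∈ A ∧ 0 ≤ h ∧ T h = h ∧ a = y + h) ∧
      (∀ y h y' h', IsPotential A T y → h ∈ A → 0 ≤ h → T h = h → a = y + h →
        IsPotential A T y' → h' ∈ A → 0 ≤ h' → T h' = h' → a = y' + h' →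
        y = y' ∧ h = h') := by
  have main_forward : T a ≤ a →
      ∃ y h, IsPotential A T y ∧ h ∈ A ∧ 0 ≤ h ∧ T h = h ∧ a = y + h := by
    intro hsuper
    set x : H →L[ℂ] H := a - T a with hx
    have hx0 : 0 ≤ x := sub_nonneg.mpr hsuper
    have hxA : x ∈ A := sub_mem ha (hT.mapsSelf a ha)
    have hiter : ∀ n, T^[n] x = T^[n] a - T^[n + 1] a := by
      intro n
      induction n with
      | zero => simp [hx]
      | succ n ih =>
        rw [Function.iterate_succ_apply', ih, hT.linear.map_sub,
          ← Function.iterate_succ_apply' T n a, ← Function.iterate_succ_apply' T (n + 1) a]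
    set S : ℕ → (H →L[ℂ] H) := fun N => ∑ n ∈ Finset.range N, T^[n] x with hSdef
    have hSformula : ∀ N, S N = a - T^[N] a := by
      intro N
      calc S N = ∑ n ∈ Finset.range N, (T^[n] a - T^[n + 1] a) :=
            Finset.sum_congr rfl fun n _ => hiter n
        _ = T^[0] a - T^[N] a := Finset.sum_range_sub' (fun n => T^[n] a) N
        _ = a - T^[N] a := by rw [Function.iterate_zero_apply]
    have hdec : ∀ n, T^[n + 1] a ≤ T^[n] a := by
      intro n
      induction n with
      | zero => simpa using hsuper
      | succ n ih =>
        rw [Function.iterate_succ_apply' T (n + 1) a]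
        calc T (T^[n + 1] a) ≤ T (T^[n] a) := markov_mono hT ih
          _ = T^[n + 1] a := (Function.iterate_succ_apply' T n a).symm
    have hlea : ∀ n, T^[n] a ≤ a := by
      intro n
      induction n with
      | zero => exact le_rfl
      | succ n ih => exact (hdec n).trans ih
    have hSmono : Monotone S := by
      apply monotone_nat_of_le_succ
      intro N
      rw [hSformula N, hSformula (N + 1)]
      exact sub_le_sub_left (hdec N) a
    have hS0 : ∀ N, (0:H →L[ℂ] H) ≤ S N := by
      intro N; rw [hSformula N]; exact sub_nonneg.mpr (hlea N)
    have hSbd : ∀ N, S N ≤ a := by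
      intro N; rw [hSformula N]
      exact sub_le_self a (iter_pos hT ha0 N)
    obtain ⟨y, hyconv⟩ := sot_exists hSmono hS0 hSbd
    have hsum : SOTSum T x y := fun η => by simpa [hSdef, pS_apply] using hyconv η
    have hSsa : ∀ N, IsSelfAdjoint (S N) := fun N => .of_nonneg (hS0 N)
    have hlub : IsLUB (Set.range S) y := sot_isLUB hSmono hSsa hyconv
    have hy0 : (0:H →L[ℂ] H) ≤ y := by
      have h0 : S 0 ≤ y := hlub.1 ⟨0, rfl⟩
      simpa [hSdef] using h0
    have hya : y ≤ a := hlub.2 (by rintro _ ⟨N, rfl⟩; exact hSbd N)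
    have hSA : ∀ N, S N ∈ A := fun N => sum_mem fun n _ => iter_mem hT hxA n
    have hyA : y ∈ A := sot_mem hSA hyconv
    refine ⟨y, a - y, ⟨hyA, hy0, x, hxA, hx0, hsum⟩, sub_mem ha hyA,
      sub_nonneg.mpr hya, ?_, by abel⟩
    rw [hT.linear.map_sub, potential_T_eq hT hx0 hsum, hx]
    abel
  refine ⟨⟨main_forward, ?_⟩, ?_⟩
  · rintro ⟨y, h, ⟨hyA, hy0, x, hxA, hx0, hsum⟩, hhA, hh0, hTh, rfl⟩
    have hTy : T y = y - x := potential_T_eq hT hx0 hsum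
    have he : T (y + h) = (y - x) + h := by rw [hT.linear.map_add, hTy, hTh]
    rw [he]
    exact add_le_add_left (sub_le_self y hx0) h
  · rintro y h y' h' ⟨hyA, hy0, x, hxA, hx0, hsum⟩ hhA hh0 hTh rfl
      ⟨hy'A, hy'0, x', hx'A, hx'0, hsum'⟩ hh'A hh'0 hTh' heq
    have hadd : ∀ (k : ℕ) (u v : H →L[ℂ] H), T^[k] (u + v) = T^[k] u + T^[k] v := by
      intro k
      induction k with
      | zero => intro u v; rfl
      | succ k ih =>
        intro u v
        rw [Function.iterate_succ_apply', Function.iterate_succ_apply',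
          Function.iterate_succ_apply', ih, hT.linear.map_add]
    have hfix : ∀ {g : H →L[ℂ] H}, T g = g → ∀ k, T^[k] g = g := by
      intro g hg k
      induction k with
      | zero => rfl
      | succ k ih => rw [Function.iterate_succ_apply', ih, hg]
    have keygen : ∀ (y₀ h₀ x₀ : H →L[ℂ] H), 0 ≤ x₀ → SOTSum T x₀ y₀ → T h₀ = h₀ →
        ∀ η, Tendsto (fun k => T^[k] (y₀ + h₀) η) atTop (𝓝 (h₀ η)) := by
      intro y₀ h₀ x₀ hx₀ hsum₀ hTh₀ η
      have he : ∀ k, T^[k] (y₀ + h₀) η =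
          (y₀ η - (∑ n ∈ Finset.range k, T^[n] x₀) η) + h₀ η := by
        intro k
        rw [hadd k, potential_iter_eq hT hx₀ hsum₀ k, hfix hTh₀ k]
        simp [ContinuousLinearMap.sub_apply, ContinuousLinearMap.add_apply]
      simp only [he]
      have h1 : Tendsto (fun k => (∑ n ∈ Finset.range k, T^[n] x₀) η) atTop (𝓝 (y₀ η)) := by
        simpa [pS_apply] using hsum₀ η
      have h2 := ((tendsto_const_nhds (x := y₀ η)).sub h1).add (tendsto_const_nhds (x := h₀ η))
      simpa using h2
    have key := keygen y h x hx0 hsum hTh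
    have key' := keygen y' h' x' hx'0 hsum' hTh'
    rw [← heq] at key'
    have hh : h = h' := ContinuousLinearMap.ext fun η => tendsto_nhds_unique (key η) (key' η)
    refine ⟨?_, hh⟩
    rw [hh] at heq
    exact add_right_cancel heq
end

section
/- If h ∈ A₊ is a fixed point of a Markov operator T and h ≤ y for some potential y of T, then h = 0. -/
open Filter Topology ContinuousLinearMap

open QMP

/-- A positive fixed point of `T` dominated by a potential vanishes. -/
theorem fixed_point_le_potential_eq_zero
    {H : Type*} [NormedAddCommGroup H] [InnerProductSpace ℂ H] [CompleteSpace H]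
    (A : VonNeumannAlgebra H) (T : (H →L[ℂ] H) → (H →L[ℂ] H)) (hT : IsMarkov A T)
    (h : H →L[ℂ] H) (hmem : h ∈ A) (h0 : 0 ≤ h) (hfix : T h = h)
    (y : H →L[ℂ] H) (hy : IsPotential A T y) (hle : h ≤ y) :
    h = 0 := by
  classical
  obtain ⟨hyA, hy0, x, hxA, hx0, hsum⟩ := hy
  -- `T` is a positive map
  have Tpos : ∀ z : H →L[ℂ] H, 0 ≤ z → 0 ≤ T z := by
    intro z hz
    rw [StarOrderedRing.nonneg_iff] at hz
    induction hz using AddSubmonoid.closure_induction with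
    | mem w hw =>
      obtain ⟨s, rfl⟩ := hw
      have := hT.cp 1 (fun _ => s) (fun _ => 1)
      simpa using this
    | zero =>
      have : T 0 = 0 := hT.linear.map_zero
      rw [this]
    | add a b ha hb iha ihb =>
      rw [hT.linear.map_add]
      exact add_nonneg iha ihb
  have Tmono : ∀ a b : H →L[ℂ] H, a ≤ b → T a ≤ T b := by
    intro a b hab
    have h1 : 0 ≤ T (b - a) := Tpos _ (sub_nonneg.mpr hab)
    rw [hT.linear.map_sub] at h1
    exact sub_nonneg.mp h1
  -- partial sums
  set S : ℕ → (H →L[ℂ] H) := fun N => ∑ n ∈ Finset.range N, (T^[n] x) with hS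
  have hTn : ∀ n, 0 ≤ T^[n] x := by
    intro n
    induction n with
    | zero => simpa using hx0
    | succ n ih => rw [Function.iterate_succ_apply']; exact Tpos _ ih
  have hS0 : ∀ N, 0 ≤ S N := fun N => Finset.sum_nonneg fun n _ => hTn n
  have Smono : Monotone S := by
    apply monotone_nat_of_le_succ
    intro N
    simp only [hS, Finset.sum_range_succ]
    exact le_add_of_nonneg_right (hTn N)
  -- quadratic forms
  have mono_qf : ∀ p q : H →L[ℂ] H, p ≤ q → ∀ η : H,
      RCLike.re (inner ℂ (p η) η : ℂ) ≤ RCLike.re (inner ℂ (q η) η : ℂ) := by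
    intro p q hpq η
    have := hpq.re_inner_nonneg_left η
    rw [ContinuousLinearMap.sub_apply, inner_sub_left, map_sub] at this
    linarith
  have hSapp : ∀ N (η : H), S N η = ∑ n ∈ Finset.range N, (T^[n] x) η := by
    intro N η
    simp [hS, ContinuousLinearMap.sum_apply]
  have hqf_tendsto : ∀ η : H,
      Filter.Tendsto (fun N => RCLike.re (inner ℂ (S N η) η : ℂ)) atTop
        (𝓝 (RCLike.re (inner ℂ (y η) η : ℂ))) := by
    intro η
    have h1 : Filter.Tendsto (fun N => S N η) atTop (𝓝 (y η)) := by
      simpa only [← hSapp] using hsum η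
    exact (RCLike.continuous_re.tendsto _).comp (h1.inner tendsto_const_nhds)
  have qf_mono : ∀ η : H, Monotone fun N => RCLike.re (inner ℂ (S N η) η : ℂ) :=
    fun η _ _ hNM => mono_qf _ _ (Smono hNM) η
  -- y is the LUB of the partial sums
  have hub : ∀ N, S N ≤ y := by
    intro N
    refine ⟨?_, fun η => ?_⟩
    · have hya := ((ContinuousLinearMap.nonneg_iff_isPositive y).mp hy0).isSelfAdjoint
      have hSa := ((ContinuousLinearMap.nonneg_iff_isPositive (S N)).mp (hS0 N)).isSelfAdjoint
      exact (hya.sub hSa).isSymmetric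
    · have := (qf_mono η).ge_of_tendsto (hqf_tendsto η) N
      simp only [ContinuousLinearMap.reApplyInnerSelf, ContinuousLinearMap.sub_apply,
        inner_sub_left, map_sub]
      linarith
  have hlub : IsLUB (Set.range S) y := by
    constructor
    · rintro p ⟨N, rfl⟩; exact hub N
    · rintro r hr
      have hr0 : (0 : H →L[ℂ] H) ≤ r := by
        have := hr ⟨0, rfl⟩
        simpa [hS] using this
      refine ⟨?_, fun η => ?_⟩
      · have hra := ((ContinuousLinearMap.nonneg_iff_isPositive r).mp hr0).isSelfAdjoint
        have hya := ((ContinuousLinearMap.nonneg_iff_isPositive y).mp hy0).isSelfAdjoint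
        exact (hra.sub hya).isSymmetric
      · have hb : ∀ N, RCLike.re (inner ℂ (S N η) η : ℂ) ≤ RCLike.re (inner ℂ (r η) η : ℂ) :=
          fun N => mono_qf _ _ (hr ⟨N, rfl⟩) η
        have := le_of_tendsto (hqf_tendsto η) (Filter.Eventually.of_forall hb)
        simp only [ContinuousLinearMap.reApplyInnerSelf, ContinuousLinearMap.sub_apply,
          inner_sub_left, map_sub]
        linarith
  -- T of partial sums
  have TS : ∀ N, T (S N) = S (N + 1) - x := by
    intro N
    have h1 : T (S N) = ∑ n ∈ Finset.range N, T (T^[n] x) :=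
      map_sum (IsLinearMap.mk' T hT.linear) (fun n => T^[n] x) (Finset.range N)
    have h2 : ∀ n, T (T^[n] x) = T^[n + 1] x := fun n =>
      (Function.iterate_succ_apply' T n x).symm
    rw [h1]
    simp only [h2]
    have h3 : S (N + 1) = (∑ n ∈ Finset.range N, T^[n + 1] x) + T^[0] x := by
      rw [hS]
      exact Finset.sum_range_succ' _ N
    rw [h3]
    simp
  -- normality: T y ≤ y - x
  have hTy : T y ≤ y - x := by
    have key := hT.normal S y Smono hlub
    apply key.2
    rintro p ⟨N, rfl⟩
    show T (S N) ≤ y - x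
    rw [TS N]
    exact sub_le_sub_right (hub (N + 1)) x
  -- main induction : h ≤ y - S N
  have main : ∀ N, h ≤ y - S N := by
    intro N
    induction N with
    | zero => simpa [hS] using hle
    | succ N ih =>
      have h1 : T h ≤ T (y - S N) := Tmono _ _ ih
      rw [hfix] at h1
      have h2 : T (y - S N) = T y - (S (N + 1) - x) := by
        rw [hT.linear.map_sub, TS N]
      calc h ≤ T (y - S N) := h1
        _ = T y - (S (N + 1) - x) := h2
        _ ≤ (y - x) - (S (N + 1) - x) := sub_le_sub_right hTy _
        _ = y - S (N + 1) := by abel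
  -- quadratic form of h vanishes
  have hqf0 : ∀ η : H, (inner ℂ (h η) η : ℂ) = 0 := by
    intro η
    have hub' : ∀ N, RCLike.re (inner ℂ (h η) η : ℂ) ≤
        RCLike.re (inner ℂ (y η) η : ℂ) - RCLike.re (inner ℂ (S N η) η : ℂ) := by
      intro N
      have := mono_qf _ _ (main N) η
      rw [ContinuousLinearMap.sub_apply, inner_sub_left, map_sub] at this
      linarith
    have htend : Filter.Tendsto (fun N => RCLike.re (inner ℂ (y η) η : ℂ)
        - RCLike.re (inner ℂ (S N η) η : ℂ)) atTop (𝓝 0) := by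
      have := (tendsto_const_nhds (x := RCLike.re (inner ℂ (y η) η : ℂ))
        (f := atTop (α := ℕ))).sub (hqf_tendsto η)
      simpa using this
    have hle0 : RCLike.re (inner ℂ (h η) η : ℂ) ≤ 0 := ge_of_tendsto' htend hub'
    have hge0 : 0 ≤ RCLike.re (inner ℂ (h η) η : ℂ) := by
      have := ((ContinuousLinearMap.nonneg_iff_isPositive h).mp h0).re_inner_nonneg_left η
      exact this
    have hre : RCLike.re (inner ℂ (h η) η : ℂ) = 0 := le_antisymm hle0 hge0
    have hpos := (ContinuousLinearMap.nonneg_iff_isPositive h).mp h0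
    have := ((ContinuousLinearMap.isPositive_iff_complex h).mp hpos η).1
    rw [← this, hre]
    simp
  have : (h : H →ₗ[ℂ] H) = 0 := (inner_map_self_eq_zero (h : H →ₗ[ℂ] H)).mp fun η => hqf0 η
  exact ContinuousLinearMap.coe_injective (by simpa using this)
end

section
/- For the left shift T₀ on ℓ^∞(ℕ), defined by T₀(f)(n) = f(n+1), the set of potentials equals the set of nonnegative decreasing sequences converging to zero, and the set of charges equals the nonnegative elements of ℓ¹(ℕ) ⊆ ℓ^∞(ℕ). -/
open Filter Topology

private lemma summable_of_partial {x : ℕ → ℝ} (hx : ∀ n, 0 ≤ x n) {L : ℝ}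
    (h : Tendsto (fun N => ∑ k ∈ Finset.range N, x k) atTop (𝓝 L)) : Summable x := by
  have mono : Monotone (fun N => ∑ k ∈ Finset.range N, x k) := fun a b hab =>
    Finset.sum_le_sum_of_subset_of_nonneg (Finset.range_subset_range.2 hab) (fun i _ _ => hx i)
  exact summable_of_sum_range_le hx (fun n => mono.ge_of_tendsto h n)

private lemma hasSum_tail {x : ℕ → ℝ} (hx : Summable x) (n : ℕ) :
    HasSum (fun k => x (n + k)) (∑' k, x (n + k)) := by
  have : Summable (fun k => x (n + k)) := by
    have := (summable_nat_add_iff n).2 hx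
    simpa [add_comm] using this
  exact this.hasSum

/-- For the left shift `T₀` on `ℓ^∞(ℕ)` (acting on bounded real sequences by
`T₀ f n = f (n+1)`), the potentials are exactly the nonnegative decreasing sequences
tending to zero, and the charges (the `T₀`-summable elements) are exactly the nonnegative
elements of `ℓ¹(ℕ)`. Here `y` is a potential with charge `x` iff
`y n = ∑_{k} x (n + k)` with pointwise convergence of the partial sums. -/
theorem shift_potentials_and_charges :
    (∀ y : ℕ → ℝ, (BddAbove (Set.range y) ∧
        ∃ x : ℕ → ℝ, (∀ n, 0 ≤ x n) ∧ BddAbove (Set.range x) ∧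
          ∀ n, Tendsto (fun N => ∑ k ∈ Finset.range N, x (n + k)) atTop (𝓝 (y n)))
      ↔ ((∀ n, 0 ≤ y n) ∧ Antitone y ∧ Tendsto y atTop (𝓝 0))) ∧
    (∀ x : ℕ → ℝ, ((∀ n, 0 ≤ x n) ∧ BddAbove (Set.range x) ∧
        ∃ y : ℕ → ℝ, BddAbove (Set.range y) ∧
          ∀ n, Tendsto (fun N => ∑ k ∈ Finset.range N, x (n + k)) atTop (𝓝 (y n)))
      ↔ ((∀ n, 0 ≤ x n) ∧ Summable x)) := by
  constructor
  · intro y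
    constructor
    · rintro ⟨-, x, hx, -, hsum⟩
      -- x is summable
      have hsx : Summable x := summable_of_partial hx (by simpa using hsum 0)
      -- y n is the tail sum
      have hy : ∀ n, y n = ∑' k, x (n + k) := fun n =>
        tendsto_nhds_unique (hsum n) ((hasSum_tail hsx n).tendsto_sum_nat)
      have hy' : ∀ n, y n = (∑' k, x k) - ∑ i ∈ Finset.range n, x i := by
        intro n
        have := Summable.sum_add_tsum_nat_add (f := x) n hsx
        have h2 : (∑' k, x (n + k)) = ∑' k, x (k + n) := by
          congr 1; funext k; rw [add_comm]
        rw [hy n, h2]; linarith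
      refine ⟨fun n => by rw [hy n]; exact tsum_nonneg (fun k => hx _), ?_, ?_⟩
      · intro a b hab
        rw [hy' a, hy' b]
        have : ∑ i ∈ Finset.range a, x i ≤ ∑ i ∈ Finset.range b, x i :=
          Finset.sum_le_sum_of_subset_of_nonneg (Finset.range_subset_range.2 hab) (fun i _ _ => hx i)
        linarith
      · have : Tendsto (fun n => (∑' k, x k) - ∑ i ∈ Finset.range n, x i) atTop (𝓝 0) := by
          have := (hsx.hasSum.tendsto_sum_nat).const_sub (∑' k, x k)
          simpa using this
        exact this.congr (fun n => (hy' n).symm)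
    · rintro ⟨hy0, hya, hyl⟩
      refine ⟨⟨y 0, by rintro v ⟨n, rfl⟩; exact hya (Nat.zero_le n)⟩,
        fun n => y n - y (n + 1), fun n => sub_nonneg.2 (hya (Nat.le_succ n)), ?_, ?_⟩
      · refine ⟨y 0, ?_⟩
        rintro v ⟨n, rfl⟩
        have h1 : (0:ℝ) ≤ y (n+1) := hy0 _
        have h2 : y n ≤ y 0 := hya (Nat.zero_le n)
        dsimp; linarith
      · intro n
        have htel : ∀ N, ∑ k ∈ Finset.range N, (y (n + k) - y (n + k + 1)) = y n - y (n + N) := by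
          intro N
          have := Finset.sum_range_sub' (f := fun k => y (n + k)) N
          simpa [add_assoc] using this
        have : Tendsto (fun N => y n - y (n + N)) atTop (𝓝 (y n - 0)) := by
          refine Tendsto.const_sub _ ?_
          have := hyl.comp (tendsto_add_atTop_nat n)
          simpa [add_comm, Function.comp_def] using this
        simpa using this.congr (fun N => (htel N).symm)
  · intro x
    constructor
    · rintro ⟨hx, -, y, -, hsum⟩
      exact ⟨hx, summable_of_partial hx (by simpa using hsum 0)⟩
    · rintro ⟨hx, hsx⟩
      refine ⟨hx, ⟨∑' k, x k, ?_⟩, fun n => ∑' k, x (n + k), ⟨∑' k, x k, ?_⟩,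
        fun n => (hasSum_tail hsx n).tendsto_sum_nat⟩
      · rintro v ⟨n, rfl⟩
        exact Summable.le_tsum hsx n (fun m _ => hx m)
      · rintro v ⟨n, rfl⟩
        have h2 : (∑' k, x (n + k)) = ∑' k, x (k + n) := by
          congr 1; funext k; rw [add_comm]
        have := Summable.sum_add_tsum_nat_add (f := x) n hsx
        have h3 : (0:ℝ) ≤ ∑ i ∈ Finset.range n, x i := Finset.sum_nonneg (fun i _ => hx i)
        dsimp; rw [h2]; linarith
end

section
/- Let T be a Markov operator on a von Neumann algebra A and x ∈ A₊ with support projection p := supp x. Then the support projection of T(x) equals the support projection of T(p). In particular, if x, y ∈ A₊ have equal supports then T(x) and T(y) have equal supports. -/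
open Filter Topology ContinuousLinearMap

open QMP


set_option synthInstance.maxHeartbeats 1000000
set_option maxHeartbeats 1000000
set_option linter.unusedSectionVars false

namespace QMPAux

variable {H : Type*} [NormedAddCommGroup H] [InnerProductSpace ℂ H] [CompleteSpace H]

lemma mul_eq_zero_of_conj_eq_zero {c r : H →L[ℂ] H} (hc : 0 ≤ c) (hr : IsSelfAdjoint r)
    (h : r * c * r = 0) : c * r = 0 := by
  set s := CFC.sqrt c with hs
  have hs0 : (0 : H →L[ℂ] H) ≤ s := CFC.sqrt_nonneg c
  have hss : s * s = c := CFC.sqrt_mul_sqrt_self c hc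
  have h1 : star (s * r) * (s * r) = r * c * r := by
    rw [star_mul, hr.star_eq, (IsSelfAdjoint.of_nonneg hs0).star_eq, mul_assoc,
      ← mul_assoc s s r, hss, ← mul_assoc]
  have h2 := CStarRing.norm_star_mul_self (x := s * r)
  rw [h1, h, norm_zero] at h2
  have h3 : ‖s * r‖ = 0 := by nlinarith [norm_nonneg (s * r)]
  have h4 : s * r = 0 := norm_eq_zero.mp h3
  calc c * r = s * (s * r) := by rw [← mul_assoc, hss]
  _ = 0 := by rw [h4, mul_zero]

lemma supported_of_le {c d q : H →L[ℂ] H} (hc : 0 ≤ c) (hcd : c ≤ d)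
    (hq : IsSelfAdjoint q) (hq2 : IsIdempotentElem q) (hd : d = q * d * q) :
    c = q * c * q := by
  set r : H →L[ℂ] H := 1 - q with hrdef
  have hr : IsSelfAdjoint r := (IsSelfAdjoint.one _).sub hq
  have hqr : q * r = 0 := by
    simp [hrdef, mul_sub, hq2.eq]
  have hrdr : r * d * r = 0 := by
    rw [hd]
    simp only [mul_assoc]
    rw [hqr]
    simp only [mul_zero]
  have hrcr1 : (0 : H →L[ℂ] H) ≤ r * c * r := by
    have := star_left_conjugate_nonneg hc r
    rwa [hr.star_eq] at this
  have hrcr2 : r * c * r ≤ r * d * r := by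
    have := star_left_conjugate_le_conjugate hcd r
    rwa [hr.star_eq] at this
  have hrcr : r * c * r = 0 := le_antisymm (hrdr ▸ hrcr2) hrcr1
  have hcr : c * r = 0 := mul_eq_zero_of_conj_eq_zero hc hr hrcr
  have hcq : c * q = c := by
    have : c * (1 - q) = 0 := hcr
    rw [mul_sub, mul_one, sub_eq_zero] at this
    exact this.symm
  have hqc : q * c = c := by
    have := congrArg star hcq
    rwa [star_mul, hq.star_eq, (IsSelfAdjoint.of_nonneg hc).star_eq] at this
  rw [mul_assoc, hcq, hqc]

lemma proj_nonneg {p : H →L[ℂ] H} (hpsa : IsSelfAdjoint p) (hp2 : IsIdempotentElem p) :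
    (0 : H →L[ℂ] H) ≤ p := by
  have := star_mul_self_nonneg p
  rwa [hpsa.star_eq, hp2.eq] at this

lemma mul_left_eq_self {x p : H →L[ℂ] H} (hp2 : IsIdempotentElem p) (hxpp : x = p * x * p) :
    p * x = x ∧ x * p = x := by
  constructor
  · conv_lhs => rw [hxpp]
    rw [← mul_assoc, ← mul_assoc, hp2.eq, ← hxpp]
  · conv_lhs => rw [hxpp]
    rw [mul_assoc, mul_assoc, hp2.eq, ← mul_assoc, ← hxpp]


section Markov

variable {A : VonNeumannAlgebra H} {T : (H →L[ℂ] H) → (H →L[ℂ] H)}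

lemma map_nonneg' (hT : IsMarkov A T) {c : H →L[ℂ] H} (hc : 0 ≤ c) : 0 ≤ T c := by
  set s := CFC.sqrt c with hs
  have hs0 : (0 : H →L[ℂ] H) ≤ s := CFC.sqrt_nonneg c
  have hss : s * s = c := CFC.sqrt_mul_sqrt_self c hc
  have h := hT.cp 1 (fun _ => s) (fun _ => 1)
  simpa [Fin.sum_univ_one, star_one, one_mul, mul_one,
    (IsSelfAdjoint.of_nonneg hs0).star_eq, hss] using h

lemma map_mono (hT : IsMarkov A T) {a b : H →L[ℂ] H} (hab : a ≤ b) : T a ≤ T b := by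
  have h := map_nonneg' hT (sub_nonneg.mpr hab)
  rw [hT.linear.map_sub] at h
  exact sub_nonneg.mp h

lemma map_real_smul (hT : IsMarkov A T) (r : ℝ) (a : H →L[ℂ] H) : T (r • a) = r • T a := by
  rw [← algebraMap_smul ℂ r a, hT.linear.map_smul, algebraMap_smul]

lemma le_norm_smul_proj {x p : H →L[ℂ] H} (hx : 0 ≤ x) (hpsa : IsSelfAdjoint p)
    (hp2 : IsIdempotentElem p) (hxpp : x = p * x * p) : x ≤ ‖x‖ • p := by
  have h1 : x ≤ ‖x‖ • (1 : H →L[ℂ] H) := by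
    have := IsSelfAdjoint.le_algebraMap_norm_self (a := x) (IsSelfAdjoint.of_nonneg hx)
    rwa [Algebra.algebraMap_eq_smul_one] at this
  calc x = p * x * p := hxpp
  _ ≤ p * (‖x‖ • (1 : H →L[ℂ] H)) * p := by
      have := star_left_conjugate_le_conjugate h1 p
      rwa [hpsa.star_eq] at this
  _ = ‖x‖ • p := by
      simp [mul_smul_comm, smul_mul_assoc, hp2.eq]

/-- The easy direction: if `T p` is supported under `q` then so is `T x`. -/
lemma easy (hT : IsMarkov A T) {x p q : H →L[ℂ] H} (hx : 0 ≤ x)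
    (hp : IsSupport A x p) (hq : IsProj A q) (hTp : T p = q * T p * q) :
    T x = q * T x * q := by
  obtain ⟨⟨hpA, hpsa, hp2⟩, hxpp, hpmin⟩ := hp
  obtain ⟨hqA, hqsa, hq2⟩ := hq
  have h1 : T x ≤ ‖x‖ • T p := by
    have := map_mono hT (le_norm_smul_proj hx hpsa hp2 hxpp)
    rwa [map_real_smul hT] at this
  refine supported_of_le (map_nonneg' hT hx) h1 hqsa hq2 ?_
  conv_lhs => rw [hTp]
  simp only [mul_smul_comm, smul_mul_assoc]

/-- The orthogonal projection onto the closure of the range of a self-adjoint `x ∈ A`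
belongs to `A` and supports `x`. -/
lemma exists_range_proj {A : VonNeumannAlgebra H} {x : H →L[ℂ] H} (hxA : x ∈ A)
    (hxsa : IsSelfAdjoint x) :
    ∃ e : H →L[ℂ] H, IsProj A e ∧ x = e * x * e ∧
      (∀ η, e η ∈ closure (Set.range x)) ∧ (∀ ζ ∈ closure (Set.range x), e ζ = ζ) := by
  set K : Submodule ℂ H := (LinearMap.range (x : H →ₗ[ℂ] H)).topologicalClosure with hK
  have hKclosed : IsClosed (K : Set H) := Submodule.isClosed_topologicalClosure _
  haveI : CompleteSpace K := hKclosed.completeSpace_coe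
  set e : H →L[ℂ] H := K.subtypeL ∘L K.orthogonalProjectionOnto with he
  have hKset : (K : Set H) = closure (Set.range x) := by
    rw [hK, Submodule.topologicalClosure_coe]
    rfl
  have hemem : ∀ η, e η ∈ K := fun η => (K.orthogonalProjectionOnto η).2
  have hefix : ∀ ζ ∈ K, e ζ = ζ := by
    intro ζ hζ
    have := Submodule.orthogonalProjectionOnto_mem_subspace_eq_self (K := K) ⟨ζ, hζ⟩
    simpa [he] using congrArg (Subtype.val) this
  have hesa : IsSelfAdjoint e := isSelfAdjoint_starProjection K
  have he2 : IsIdempotentElem e := by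
    refine ContinuousLinearMap.ext fun η => ?_
    show e (e η) = e η
    exact hefix _ (hemem η)
  have hxmem : ∀ η, x η ∈ K := by
    intro η
    exact Submodule.le_topologicalClosure _ (LinearMap.mem_range.mpr ⟨η, rfl⟩)
  have hex : e * x = x := by
    refine ContinuousLinearMap.ext fun η => ?_
    show e (x η) = x η
    exact hefix _ (hxmem η)
  have hxe : x * e = x := by
    have := congrArg star hex
    rwa [star_mul, hesa.star_eq, hxsa.star_eq] at this
  have heA : e ∈ A := by
    rw [← A.commutant_commutant]
    rw [VonNeumannAlgebra.mem_commutant_iff]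
    intro z hz
    have hzx : x * z = z * x := VonNeumannAlgebra.mem_commutant_iff.mp hz x hxA
    have hzsx : x * star z = star z * x :=
      VonNeumannAlgebra.mem_commutant_iff.mp (star_mem hz) x hxA
    have hinv : ∀ w : H →L[ℂ] H, x * w = w * x → ∀ ζ ∈ K, w ζ ∈ K := by
      intro w hw ζ hζ
      have hζ' : ζ ∈ closure (Set.range x) := by rw [← hKset]; exact hζ
      have hwζ : w ζ ∈ closure (Set.range x) := by
        refine map_mem_closure w.continuous hζ' ?_
        rintro _ ⟨θ, rfl⟩
        refine ⟨w θ, ?_⟩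
        rw [← ContinuousLinearMap.mul_apply, hw, ContinuousLinearMap.mul_apply]
      have hmem : w ζ ∈ (K : Set H) := by rw [hKset]; exact hwζ
      exact SetLike.mem_coe.mp hmem
    have h1 : e * z * e = z * e := by
      refine ContinuousLinearMap.ext fun η => ?_
      show e (z (e η)) = z (e η)
      exact hefix _ (hinv z hzx _ (hemem η))
    have h2 : e * star z * e = star z * e := by
      refine ContinuousLinearMap.ext fun η => ?_
      show e (star z (e η)) = star z (e η)
      exact hefix _ (hinv (star z) hzsx _ (hemem η))
    have h3 : e * z * e = e * z := by
      have := congrArg star h2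
      rwa [star_mul, star_mul, star_mul, hesa.star_eq, star_star, ← mul_assoc] at this
    rw [← h3, h1]
  refine ⟨e, ⟨heA, hesa, he2⟩, by rw [hex, hxe], fun η => ?_, fun ζ hζ => ?_⟩
  · rw [← hKset]; exact hemem η
  · exact hefix ζ (by rw [← hKset] at hζ; exact hζ)

lemma conj_idem {a q : H →L[ℂ] H} (hq2 : IsIdempotentElem q) :
    q * (q * a * q) * q = q * a * q := by
  rw [← mul_assoc, ← mul_assoc, hq2.eq, mul_assoc, hq2.eq]

/-- The hard direction: if `T x` is supported under the projection `q`, then so is `T p`,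
where `p = supp x`. Uses normality of `T` applied to the family `gₙ = 1 - (1 + n x)⁻¹ ↑ p`. -/
lemma key (hT : IsMarkov A T) {x p q : H →L[ℂ] H} (hxA : x ∈ A) (hx : 0 ≤ x)
    (hp : IsSupport A x p) (hq : IsProj A q) (hTx : T x = q * T x * q) :
    T p = q * T p * q := by
  obtain ⟨⟨hpA, hpsa, hp2⟩, hxpp, hpmin⟩ := hp
  obtain ⟨hqA, hqsa, hq2⟩ := hq
  have hxsa : IsSelfAdjoint x := IsSelfAdjoint.of_nonneg hx
  obtain ⟨hpx, hxp⟩ := mul_left_eq_self hp2 hxpp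
  have hp0 : (0 : H →L[ℂ] H) ≤ p := proj_nonneg hpsa hp2
  -- the approximating resolvent family
  have hone_le : ∀ n : ℕ, (1 : H →L[ℂ] H) ≤ 1 + (n : ℝ) • x := fun n =>
    le_add_of_nonneg_right (smul_nonneg (Nat.cast_nonneg n) hx)
  have hunit : ∀ n : ℕ, IsUnit ((1 : H →L[ℂ] H) + (n : ℝ) • x) := fun n =>
    CStarAlgebra.isUnit_of_le 1 (hone_le n) isStrictlyPositive_one
  set v : ℕ → (H →L[ℂ] H)ˣ := fun n => (hunit n).unit with hv
  have hvco : ∀ n, (v n : H →L[ℂ] H) = 1 + (n : ℝ) • x := fun n => (hunit n).unit_spec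
  set R : ℕ → (H →L[ℂ] H) := fun n => ↑(v n)⁻¹ with hRdef
  have hv1 : ∀ n, (1 : H →L[ℂ] H) ≤ (v n : H →L[ℂ] H) := fun n => (hvco n).symm ▸ hone_le n
  have hv0 : ∀ n, (0 : H →L[ℂ] H) ≤ (v n : H →L[ℂ] H) := fun n => zero_le_one.trans (hv1 n)
  have hR0 : ∀ n, 0 ≤ R n := fun n => CFC.inv_nonneg_of_nonneg (v n) (hv0 n)
  have hR1 : ∀ n, R n ≤ 1 := fun n => CStarAlgebra.inv_le_one (hv1 n)
  have hcomm : ∀ n, Commute x (R n) := by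
    intro n
    refine Commute.units_inv_right ?_
    show x * (v n : H →L[ℂ] H) = (v n : H →L[ℂ] H) * x
    rw [hvco n]
    simp [mul_add, add_mul, mul_smul_comm, smul_mul_assoc]
  set g : ℕ → (H →L[ℂ] H) := fun n => 1 - R n with hgdef
  have hginv : ∀ n, R n + (n : ℝ) • (x * R n) = 1 := by
    intro n
    have h := Units.mul_inv (v n)
    rw [hvco n] at h
    rwa [add_mul, one_mul, smul_mul_assoc] at h
  have hgeq : ∀ n, g n = (n : ℝ) • (x * R n) := by
    intro n
    show (1 : H →L[ℂ] H) - R n = (n : ℝ) • (x * R n)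
    rw [← hginv n, add_sub_cancel_left]
  have hgmono : Monotone g := by
    apply monotone_nat_of_le_succ
    intro n
    have hle : (v n : H →L[ℂ] H) ≤ (v (n + 1) : H →L[ℂ] H) := by
      rw [hvco, hvco]
      rw [add_le_add_iff_left]
      have h0 : (0 : H →L[ℂ] H) ≤ ((n + 1 : ℕ) : ℝ) • x - (n : ℝ) • x := by
        rw [← sub_smul]
        exact smul_nonneg (by push_cast; linarith) hx
      exact sub_nonneg.mp h0
    have := CStarAlgebra.inv_le_inv (hv0 n) hle
    exact sub_le_sub_left this 1
  have hg0 : ∀ n, 0 ≤ g n := fun n => sub_nonneg.mpr (hR1 n)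
  have hg1 : ∀ n, g n ≤ 1 := fun n => sub_le_self 1 (hR0 n)
  have hgnx : ∀ n, g n ≤ (n : ℝ) • x := by
    intro n
    rw [← sub_nonneg]
    have hx_sub : x - x * R n = (n : ℝ) • (x * R n * x) := by
      have h2 : x * g n = (n : ℝ) • (x * R n * x) := by
        rw [hgeq n, mul_smul_comm, (hcomm n).eq, ← mul_assoc, ← (hcomm n).eq]
      calc x - x * R n = x * (1 - R n) := by rw [mul_sub, mul_one]
      _ = (n : ℝ) • (x * R n * x) := h2
    have h1 : (n : ℝ) • x - g n = (n : ℝ) • ((n : ℝ) • (x * R n * x)) := by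
      rw [hgeq n, ← smul_sub, hx_sub]
    rw [h1]
    have hpos : (0 : H →L[ℂ] H) ≤ x * R n * x := by
      have := star_left_conjugate_nonneg (hR0 n) x
      rwa [hxsa.star_eq] at this
    exact smul_nonneg (Nat.cast_nonneg n) (smul_nonneg (Nat.cast_nonneg n) hpos)
  have hpcomm : ∀ n, Commute p (R n) := by
    intro n
    refine Commute.units_inv_right ?_
    show p * (v n : H →L[ℂ] H) = (v n : H →L[ℂ] H) * p
    rw [hvco n]
    simp only [mul_add, add_mul, mul_one, one_mul, mul_smul_comm, smul_mul_assoc, hpx, hxp]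
  have hgp_eq : ∀ n, g n * p = g n := by
    intro n
    rw [hgeq n, smul_mul_assoc, mul_assoc, ← (hpcomm n).eq, ← mul_assoc, hxp]
  have hpg_eq : ∀ n, p * g n = g n := by
    intro n
    rw [hgeq n, mul_smul_comm, ← mul_assoc, hpx]
  have hgp : ∀ n, g n ≤ p := by
    intro n
    rw [← sub_nonneg]
    have hRg : R n = 1 - g n := (sub_sub_cancel 1 (R n)).symm
    have hkey : p - g n = p * R n * p := by
      rw [hRg, mul_sub, mul_one, sub_mul, hp2.eq, mul_assoc, ← mul_assoc, hpg_eq n, hgp_eq n]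
    rw [hkey]
    have := star_left_conjugate_nonneg (hR0 n) p
    rwa [hpsa.star_eq] at this
  -- the support projection onto the closure of the range of `x`
  obtain ⟨e, heP, hxee, hemem, hefix⟩ := exists_range_proj hxA hxsa
  have hpe : p ≤ e := hpmin e heP hxee
  have hpep : p = e * p * e :=
    supported_of_le hp0 hpe heP.2.1 heP.2.2 (by rw [heP.2.2.eq, heP.2.2.eq])
  obtain ⟨hep, hpe'⟩ := mul_left_eq_self heP.2.2 hpep
  -- strong convergence of `g n` to `p`
  have hcontr : ∀ (n : ℕ) (ζ : H), ‖R n ζ‖ ≤ ‖ζ‖ := by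
    intro n ζ
    have h1 : ‖R n ζ‖ ≤ ‖R n‖ * ‖ζ‖ := (R n).le_opNorm ζ
    have h2 : ‖R n‖ ≤ 1 := (CStarAlgebra.norm_le_one_iff_of_nonneg (R n) (hR0 n)).mpr (hR1 n)
    nlinarith [norm_nonneg ζ]
  have hgcontr : ∀ (n : ℕ) (ζ : H), ‖g n ζ‖ ≤ ‖ζ‖ := by
    intro n ζ
    have h1 : ‖g n ζ‖ ≤ ‖g n‖ * ‖ζ‖ := (g n).le_opNorm ζ
    have h2 : ‖g n‖ ≤ 1 := (CStarAlgebra.norm_le_one_iff_of_nonneg (g n) (hg0 n)).mpr (hg1 n)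
    nlinarith [norm_nonneg ζ]
  have hconv : ∀ η, Tendsto (fun n => g n η) atTop (𝓝 (p η)) := by
    intro η
    have hsplit : ∀ n, g n η = p η - R n (p η) := by
      intro n
      have hx0 : x (η - p η) = 0 := by
        have h1 : (x * p) η = x η := by rw [hxp]
        rw [ContinuousLinearMap.mul_apply] at h1
        rw [map_sub, h1, sub_self]
      have hv_fix : (v n : H →L[ℂ] H) (η - p η) = η - p η := by
        rw [hvco n]
        rw [ContinuousLinearMap.add_apply, ContinuousLinearMap.one_apply,
          ContinuousLinearMap.smul_apply, hx0, smul_zero, add_zero]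
      have hR_fix : R n (η - p η) = η - p η := by
        conv_lhs => rw [← hv_fix]
        rw [← ContinuousLinearMap.mul_apply,
          show R n * (v n : H →L[ℂ] H) = 1 from Units.inv_mul (v n),
          ContinuousLinearMap.one_apply]
      have hz : g n (η - p η) = 0 := by
        show ((1 : H →L[ℂ] H) - R n) (η - p η) = 0
        rw [ContinuousLinearMap.sub_apply, ContinuousLinearMap.one_apply, hR_fix, sub_self]
      have hη : p η + (η - p η) = η := by abel
      calc g n η = g n (p η) + g n (η - p η) := by rw [← map_add, hη]
      _ = g n (p η) := by rw [hz, add_zero]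
      _ = p η - R n (p η) := by
          show ((1 : H →L[ℂ] H) - R n) (p η) = _
          rw [ContinuousLinearMap.sub_apply, ContinuousLinearMap.one_apply]
    have hpη_mem : p η ∈ closure (Set.range x) := by
      have h1 : e (p η) = p η := by
        rw [← ContinuousLinearMap.mul_apply, hep]
      rw [← h1]
      exact hemem _
    have hRtend : Tendsto (fun n => R n (p η)) atTop (𝓝 0) := by
      rw [Metric.tendsto_atTop]
      intro ε hε
      obtain ⟨w, hw_mem, hw_close⟩ := Metric.mem_closure_iff.mp hpη_mem (ε / 2) (by linarith)
      obtain ⟨θ, rfl⟩ := hw_mem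
      obtain ⟨N, hN⟩ := exists_nat_gt (2 * ‖θ‖ / ε)
      refine ⟨N + 1, fun n hn => ?_⟩
      have hn1 : 1 ≤ n := le_trans (Nat.le_add_left 1 N) hn
      have hnR : (2 * ‖θ‖ / ε) < (n : ℝ) := lt_of_lt_of_le hN (by exact_mod_cast Nat.le_of_succ_le hn)
      have hnpos : (0 : ℝ) < (n : ℝ) := by positivity
      -- bound the range part
      have hRx : R n * x = (n : ℝ)⁻¹ • g n := by
        rw [hgeq n, smul_smul, inv_mul_cancel₀ (ne_of_gt hnpos), one_smul, (hcomm n).eq]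
      have hb2 : ‖R n (x θ)‖ ≤ (n : ℝ)⁻¹ * ‖θ‖ := by
        have h1 : R n (x θ) = ((n : ℝ)⁻¹ • g n) θ := by
          rw [← ContinuousLinearMap.mul_apply, hRx]
        rw [h1, ContinuousLinearMap.smul_apply, norm_smul, norm_inv, Real.norm_natCast]
        exact mul_le_mul_of_nonneg_left (hgcontr n θ) (by positivity)
      have hb1 : ‖R n (p η - x θ)‖ ≤ ‖p η - x θ‖ := hcontr n _
      have hdist : ‖p η - x θ‖ < ε / 2 := by
        rw [← dist_eq_norm]
        exact hw_close
      have hsum : R n (p η) = R n (p η - x θ) + R n (x θ) := by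
        rw [← map_add]
        congr 1
        abel
      rw [dist_eq_norm, sub_zero, hsum]
      have hlast : (n : ℝ)⁻¹ * ‖θ‖ < ε / 2 := by
        rw [inv_mul_lt_iff₀ hnpos]
        rw [div_lt_iff₀ hε] at hnR
        nlinarith
      calc ‖R n (p η - x θ) + R n (x θ)‖ ≤ ‖R n (p η - x θ)‖ + ‖R n (x θ)‖ := norm_add_le _ _
      _ < ε / 2 + ε / 2 := by
          apply add_lt_add_of_lt_of_le (lt_of_le_of_lt hb1 hdist) (le_trans hb2 hlast.le)
      _ = ε := by ring
    have h2 : Tendsto (fun n => p η - R n (p η)) atTop (𝓝 (p η - 0)) :=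
      tendsto_const_nhds.sub hRtend
    rw [sub_zero] at h2
    exact h2.congr fun n => (hsplit n).symm
  -- `p` is the least upper bound of the `g n`
  have hlub : IsLUB (Set.range g) p := by
    constructor
    · rintro _ ⟨n, rfl⟩
      exact hgp n
    · intro u hu
      have hu' : ∀ n, g n ≤ u := fun n => hu ⟨n, rfl⟩
      have husa : IsSelfAdjoint u := by
        have h00 : g 0 ≤ u := hu' 0
        have h0 : (0 : H →L[ℂ] H) ≤ u := le_trans (hg0 0) h00
        exact IsSelfAdjoint.of_nonneg h0
      rw [ContinuousLinearMap.le_def]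
      refine ⟨ContinuousLinearMap.isSelfAdjoint_iff_isSymmetric.mp (husa.sub hpsa), fun η => ?_⟩
      rw [ContinuousLinearMap.reApplyInnerSelf_apply]
      have hlim : Tendsto (fun n => RCLike.re (inner ℂ (((u - g n) : H →L[ℂ] H) η) η : ℂ)) atTop
          (𝓝 (RCLike.re (inner ℂ (((u - p) : H →L[ℂ] H) η) η : ℂ))) := by
        have h1 : Tendsto (fun n => ((u - g n) : H →L[ℂ] H) η) atTop (𝓝 (((u - p) : H →L[ℂ] H) η)) := by
          have h2 : Tendsto (fun n => u η - g n η) atTop (𝓝 (u η - p η)) :=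
            tendsto_const_nhds.sub (hconv η)
          simpa [ContinuousLinearMap.sub_apply] using h2
        have h3 : Tendsto (fun n => (inner ℂ (((u - g n) : H →L[ℂ] H) η) η : ℂ)) atTop
            (𝓝 (inner ℂ (((u - p) : H →L[ℂ] H) η) η : ℂ)) := h1.inner tendsto_const_nhds
        exact (RCLike.continuous_re.tendsto _).comp h3
      refine ge_of_tendsto hlim (Eventually.of_forall fun n => ?_)
      have h4 := ((ContinuousLinearMap.le_def (g n) u).mp (hu' n)).2 η
      rwa [ContinuousLinearMap.reApplyInnerSelf_apply] at h4
  -- apply normality and conclude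
  have hlubT := hT.normal g p hgmono hlub
  have hTgq : ∀ n, T (g n) = q * T (g n) * q := by
    intro n
    have hle : T (g n) ≤ (n : ℝ) • T x := by
      have := map_mono hT (hgnx n)
      rwa [map_real_smul hT] at this
    refine supported_of_le (map_nonneg' hT (hg0 n)) hle hqsa hq2 ?_
    conv_lhs => rw [hTx]
    simp only [mul_smul_comm, smul_mul_assoc]
  have hub : (q * T p * q) ∈ upperBounds (Set.range fun i => T (g i)) := by
    rintro _ ⟨n, rfl⟩
    have h1 : T (g n) ≤ T p := hlubT.1 ⟨n, rfl⟩
    have h2 := star_left_conjugate_le_conjugate h1 q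
    rw [hqsa.star_eq] at h2
    calc T (g n) = q * T (g n) * q := hTgq n
    _ ≤ q * T p * q := h2
  have hle : T p ≤ q * T p * q := hlubT.2 hub
  exact supported_of_le (map_nonneg' hT hp0) hle hqsa hq2 (conj_idem hq2).symm

end Markov

end QMPAux


/-- For `x ∈ A₊` with support projection `p`, the supports of `T x` and `T p` coincide.
In particular, positive elements with equal supports have images with equal supports. -/
theorem support_map_eq_support_map_of_support
    {H : Type*} [NormedAddCommGroup H] [InnerProductSpace ℂ H] [CompleteSpace H]
    (A : VonNeumannAlgebra H) (T : (H →L[ℂ] H) → (H →L[ℂ] H)) (hT : IsMarkov A T) :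
    (∀ x p q r, x ∈ A → 0 ≤ x → IsSupport A x p →
      IsSupport A (T x) q → IsSupport A (T p) r → q = r) ∧
    (∀ x y p q q', x ∈ A → 0 ≤ x → y ∈ A → 0 ≤ y →
      IsSupport A x p → IsSupport A y p →
      IsSupport A (T x) q → IsSupport A (T y) q' → q = q') := by
  constructor
  · intro x p q r hxA hx hp hq hr
    have hTpq : T p = q * T p * q := QMPAux.key hT hxA hx hp hq.1 hq.2.1
    have h1 : r ≤ q := hr.2.2 q hq.1 hTpq
    have h2 : q ≤ r := hq.2.2 r hr.1 (QMPAux.easy hT hx hp hr.1 hr.2.1)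
    exact le_antisymm h2 h1
  · intro x y p q q' hxA hx hyA hy hpx hpy hqx hqy
    have hTpq : T p = q * T p * q := QMPAux.key hT hxA hx hpx hqx.1 hqx.2.1
    have hTpq' : T p = q' * T p * q' := QMPAux.key hT hyA hy hpy hqy.1 hqy.2.1
    have h1 : q' ≤ q := hqy.2.2 q hqx.1 (QMPAux.easy hT hy hpy hqx.1 hTpq)
    have h2 : q ≤ q' := hqx.2.2 q' hqy.1 (QMPAux.easy hT hx hpx hqy.1 hTpq')
    exact le_antisymm h2 h1
end
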